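/- Let l > 0 with l ≠ mπ for all integers m. Let φ ∈ H¹₀(0,1), ψ, w ∈ H¹(0,1) with ∫₀¹ ψ = ∫₀¹ w = 0. If φ' + ψ + l·w = 0, ψ' = 0 and w' − l·φ = 0 almost everywhere on (0,1), then φ = ψ = w = 0. -/

import Mathlib

open Real MeasureTheory intervalIntegral

/-- Definiteness of the Bresse energy norm under the non-resonance condition. -/
theorem bresse_energy_definite
    (l : ℝ) (hl : 0 < l) (hlπ : ∀ m : ℤ, l ≠ m * Real.pi)
    (φ ψ w φ' ψ' w' : ℝ → ℝ)
    (hφ : ∀ x ∈ Set.Icc (0:ℝ) 1, HasDerivAt φ (φ' x) x)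
    (hψ : ∀ x ∈ Set.Icc (0:ℝ) 1, HasDerivAt ψ (ψ' x) x)
    (hw : ∀ x ∈ Set.Icc (0:ℝ) 1, HasDerivAt w (w' x) x)
    (hφ0 : φ 0 = 0) (hφ1 : φ 1 = 0)
    (hψm : ∫ x in (0:ℝ)..1, ψ x = 0)
    (hwm : ∫ x in (0:ℝ)..1, w x = 0)
    (h1 : ∀ᵐ x ∂(volume.restrict (Set.Ioo (0:ℝ) 1)), φ' x + ψ x + l * w x = 0)
    (h2 : ∀ᵐ x ∂(volume.restrict (Set.Ioo (0:ℝ) 1)), ψ' x = 0)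
    (h3 : ∀ᵐ x ∂(volume.restrict (Set.Ioo (0:ℝ) 1)), w' x - l * φ x = 0) :
    ∀ x ∈ Set.Icc (0:ℝ) 1, φ x = 0 ∧ ψ x = 0 ∧ w x = 0 := by
  have hφc : ContinuousOn φ (Set.Icc (0:ℝ) 1) :=
    fun x hx => (hφ x hx).continuousAt.continuousWithinAt
  have hψc : ContinuousOn ψ (Set.Icc (0:ℝ) 1) :=
    fun x hx => (hψ x hx).continuousAt.continuousWithinAt
  have hwc : ContinuousOn w (Set.Icc (0:ℝ) 1) :=
    fun x hx => (hw x hx).continuousAt.continuousWithinAt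
  have h1' : ∀ᵐ x ∂(volume : Measure ℝ), x ∈ Set.Ioo (0:ℝ) 1 → φ' x + ψ x + l * w x = 0 :=
    (ae_restrict_iff' measurableSet_Ioo).mp h1
  have h2' : ∀ᵐ x ∂(volume : Measure ℝ), x ∈ Set.Ioo (0:ℝ) 1 → ψ' x = 0 :=
    (ae_restrict_iff' measurableSet_Ioo).mp h2
  have h3' : ∀ᵐ x ∂(volume : Measure ℝ), x ∈ Set.Ioo (0:ℝ) 1 → w' x - l * φ x = 0 :=
    (ae_restrict_iff' measurableSet_Ioo).mp h3
  have hne1 : ∀ᵐ x ∂(volume : Measure ℝ), x ≠ 1 := by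
    refine ae_iff.2 ?_
    simp only [ne_eq, not_not, Set.setOf_eq_eq_singleton]
    exact measure_singleton 1
  -- Key FTC step
  have key : ∀ (f f' g : ℝ → ℝ), (∀ x ∈ Set.Icc (0:ℝ) 1, HasDerivAt f (f' x) x) →
      ContinuousOn g (Set.Icc (0:ℝ) 1) →
      (∀ᵐ x ∂(volume : Measure ℝ), x ∈ Set.Ioo (0:ℝ) 1 → f' x = g x) →
      ∀ b ∈ Set.Icc (0:ℝ) 1, f b = f 0 + ∫ x in (0:ℝ)..b, g x := by
    intro f f' g hf hg hae b hb
    have hsub : Set.uIcc (0:ℝ) b ⊆ Set.Icc (0:ℝ) 1 := by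
      rw [Set.uIcc_of_le hb.1]
      exact Set.Icc_subset_Icc le_rfl hb.2
    have hgint : IntervalIntegrable g volume 0 b := (hg.mono hsub).intervalIntegrable
    have haeI : f' =ᵐ[volume.restrict (Set.uIoc 0 b)] g := by
      rw [Set.uIoc_of_le hb.1]
      refine (ae_restrict_iff' measurableSet_Ioc).2 ?_
      filter_upwards [hae, hne1] with x hx hx1 hxm
      exact hx ⟨hxm.1, lt_of_le_of_ne (hxm.2.trans hb.2) hx1⟩
    have hfint : IntervalIntegrable f' volume 0 b := hgint.congr_ae haeI.symm
    have hFTC := intervalIntegral.integral_eq_sub_of_hasDerivAt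
      (fun x hx => hf x (hsub hx)) hfint
    have hcg : ∫ x in (0:ℝ)..b, f' x = ∫ x in (0:ℝ)..b, g x :=
      intervalIntegral.integral_congr_ae ((ae_restrict_iff' measurableSet_uIoc).mp haeI)
    rw [hcg] at hFTC
    linarith
  -- ψ is constant, hence zero
  have hψconst : ∀ b ∈ Set.Icc (0:ℝ) 1, ψ b = ψ 0 := by
    intro b hb
    have := key ψ ψ' (fun _ => 0) hψ continuousOn_const h2' b hb
    simpa using this
  have hψ0 : ψ 0 = 0 := by
    have : ∫ x in (0:ℝ)..1, ψ x = ∫ x in (0:ℝ)..1, ψ 0 := by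
      refine intervalIntegral.integral_congr ?_
      intro x hx
      exact hψconst x (by rwa [Set.uIcc_of_le zero_le_one] at hx)
    rw [hψm] at this
    simpa using this.symm
  have hψzero : ∀ b ∈ Set.Icc (0:ℝ) 1, ψ b = 0 := fun b hb => (hψconst b hb).trans hψ0
  -- integral representations
  set g1 : ℝ → ℝ := fun x => -(ψ x) - l * w x with hg1def
  set g2 : ℝ → ℝ := fun x => l * φ x with hg2def
  have hg1c : ContinuousOn g1 (Set.Icc (0:ℝ) 1) := (hψc.neg).sub (hwc.const_smul l)
  have hg2c : ContinuousOn g2 (Set.Icc (0:ℝ) 1) := hφc.const_smul l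
  have hφrep : ∀ b ∈ Set.Icc (0:ℝ) 1, φ b = φ 0 + ∫ x in (0:ℝ)..b, g1 x := by
    refine key φ φ' g1 hφ hg1c ?_
    filter_upwards [h1'] with x hx hxm
    have := hx hxm
    simp only [hg1def]
    linarith
  have hwrep : ∀ b ∈ Set.Icc (0:ℝ) 1, w b = w 0 + ∫ x in (0:ℝ)..b, g2 x := by
    refine key w w' g2 hw hg2c ?_
    filter_upwards [h3'] with x hx hxm
    have := hx hxm
    simp only [hg2def]
    linarith
  -- identify pointwise derivatives on [0,1]
  have hderiv : ∀ (f : ℝ → ℝ) (f' : ℝ → ℝ) (g : ℝ → ℝ),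
      (∀ x ∈ Set.Icc (0:ℝ) 1, HasDerivAt f (f' x) x) →
      ContinuousOn g (Set.Icc (0:ℝ) 1) →
      (∀ b ∈ Set.Icc (0:ℝ) 1, f b = f 0 + ∫ x in (0:ℝ)..b, g x) →
      ∀ b ∈ Set.Icc (0:ℝ) 1, f' b = g b := by
    intro f f' g hf hg hrep b hb
    haveI : Fact (b ∈ Set.Icc (0:ℝ) 1) := ⟨hb⟩
    have hsub : Set.uIcc (0:ℝ) b ⊆ Set.Icc (0:ℝ) 1 := by
      rw [Set.uIcc_of_le hb.1]
      exact Set.Icc_subset_Icc le_rfl hb.2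
    have hgint : IntervalIntegrable g volume 0 b := (hg.mono hsub).intervalIntegrable
    have hA : HasDerivWithinAt (fun u => ∫ x in (0:ℝ)..u, g x) (g b) (Set.Icc (0:ℝ) 1) b :=
      intervalIntegral.integral_hasDerivWithinAt_right hgint
        (hg.stronglyMeasurableAtFilter_nhdsWithin measurableSet_Icc b) (hg b hb)
    have hA' : HasDerivWithinAt (fun u => f 0 + ∫ x in (0:ℝ)..u, g x) (g b)
        (Set.Icc (0:ℝ) 1) b := hA.const_add (f 0)
    have hfg : HasDerivWithinAt f (g b) (Set.Icc (0:ℝ) 1) b :=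
      hA'.congr (fun y hy => (hrep y hy)) (hrep b hb)
    exact (uniqueDiffOn_Icc zero_lt_one b hb).eq_deriv _ (hf b hb).hasDerivWithinAt hfg
  have hd1 : ∀ b ∈ Set.Icc (0:ℝ) 1, φ' b = -(ψ b) - l * w b :=
    hderiv φ φ' g1 hφ hg1c hφrep
  have hd2 : ∀ b ∈ Set.Icc (0:ℝ) 1, w' b = l * φ b :=
    hderiv w w' g2 hw hg2c hwrep
  -- energy argument
  set c := w 0 with hc
  set h : ℝ → ℝ := fun x => (φ x + c * Real.sin (l * x))^2 + (w x - c * Real.cos (l * x))^2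
    with hhdef
  have hsin : ∀ x : ℝ, HasDerivAt (fun y : ℝ => Real.sin (l * y)) (Real.cos (l * x) * l) x := by
    intro x
    simpa [Function.comp_def] using (Real.hasDerivAt_sin (l * x)).comp x ((hasDerivAt_id x).const_mul l)
  have hcos : ∀ x : ℝ, HasDerivAt (fun y : ℝ => Real.cos (l * y)) (-Real.sin (l * x) * l) x := by
    intro x
    simpa [Function.comp_def] using (Real.hasDerivAt_cos (l * x)).comp x ((hasDerivAt_id x).const_mul l)
  have hhderiv : ∀ x ∈ Set.Icc (0:ℝ) 1, HasDerivAt h 0 x := by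
    intro x hx
    have hA : HasDerivAt (fun y => φ y + c * Real.sin (l * y))
        (φ' x + c * (Real.cos (l * x) * l)) x := (hφ x hx).add ((hsin x).const_mul c)
    have hB : HasDerivAt (fun y => w y - c * Real.cos (l * y))
        (w' x - c * (-Real.sin (l * x) * l)) x := (hw x hx).sub ((hcos x).const_mul c)
    have := (hA.pow 2).add (hB.pow 2)
    have hφ'x := hd1 x hx
    have hw'x := hd2 x hx
    have hψx := hψzero x hx
    rw [hhdef]
    refine this.congr_deriv ?_
    rw [hφ'x, hw'x, hψx]
    ring
  have hconst : ∀ x ∈ Set.Icc (0:ℝ) 1, h x = h 0 := by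
    refine constant_of_has_deriv_right_zero ?_ ?_
    · rw [hhdef]
      have hsc : Continuous fun y : ℝ => c * Real.sin (l * y) :=
        continuous_const.mul (Real.continuous_sin.comp (continuous_const.mul continuous_id))
      have hcc : Continuous fun y : ℝ => c * Real.cos (l * y) :=
        continuous_const.mul (Real.continuous_cos.comp (continuous_const.mul continuous_id))
      exact ((hφc.add hsc.continuousOn).pow 2).add ((hwc.sub hcc.continuousOn).pow 2)
    · intro x hx
      exact (hhderiv x (Set.Ico_subset_Icc_self hx)).hasDerivWithinAt.mono
        (Set.Ici_subset_Ici.mpr le_rfl) |>.mono (fun y hy => hy)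
  have hh0 : h 0 = 0 := by
    simp [hhdef, hφ0, hc]
  have hsol : ∀ x ∈ Set.Icc (0:ℝ) 1,
      φ x = -(c * Real.sin (l * x)) ∧ w x = c * Real.cos (l * x) := by
    intro x hx
    have hx0 : h x = 0 := (hconst x hx).trans hh0
    rw [hhdef] at hx0
    simp only at hx0
    have hA2 : (φ x + c * Real.sin (l * x))^2 = 0 ∧ (w x - c * Real.cos (l * x))^2 = 0 := by
      constructor <;> nlinarith [sq_nonneg (φ x + c * Real.sin (l * x)),
        sq_nonneg (w x - c * Real.cos (l * x)), hx0]
    constructor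
    · have := pow_eq_zero_iff (n := 2) (by norm_num) |>.mp hA2.1
      linarith
    · have := pow_eq_zero_iff (n := 2) (by norm_num) |>.mp hA2.2
      linarith
  -- the boundary condition forces c = 0
  have hc0 : c = 0 := by
    have h1mem : (1:ℝ) ∈ Set.Icc (0:ℝ) 1 := by constructor <;> norm_num
    have := (hsol 1 h1mem).1
    rw [hφ1, mul_one] at this
    have hcs : c * Real.sin l = 0 := by linarith
    rcases mul_eq_zero.mp hcs with hcc | hss
    · exact hcc
    · exfalso
      obtain ⟨n, hn⟩ := Real.sin_eq_zero_iff.mp hss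
      exact hlπ n hn.symm
  intro x hx
  obtain ⟨hφx, hwx⟩ := hsol x hx
  refine ⟨?_, hψzero x hx, ?_⟩
  · rw [hφx, hc0]; ring
  · rw [hwx, hc0]; ring
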